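/- Let Ψ : ℕ → ℝ be any function and define λ^{(m)}_k := Σ_{i=0}^{k−1} C(k−1,i)·(−1)^i·(Ψ(m−k+i+1) − Ψ(m−k+i)) for 1 ≤ k ≤ m. Then for all integers 0 ≤ i < j ≤ n one has C(n−i, j−i)·λ^{(n−i)}_{j−i} = Σ_{k=i}^{j} (−1)^{j−k+1}·(C(n,j)·C(j,k)·C(k,i) / C(n,i))·Ψ(n−k), an identity in ℝ. -/

import Mathlib

/-- The Lévy-frailty Marshall–Olkin shock rate `λ^{(m)}_k` associated to a set of
`k` components out of `m`, for a Laplace exponent `Ψ`. -/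
noncomputable def lfmoRate (Ψ : ℕ → ℝ) (m k : ℕ) : ℝ :=
  ∑ i ∈ Finset.range k,
    ((k - 1).choose i : ℝ) * (-1 : ℝ) ^ i * (Ψ (m - k + i + 1) - Ψ (m - k + i))

open Finset in
lemma lfmo_aux (Ψ : ℕ → ℝ) (m k : ℕ) :
    lfmoRate Ψ m (k + 1) =
      ∑ s ∈ Finset.range (k + 2),
        (-1 : ℝ) ^ (s + 1) * ((k + 1).choose s : ℝ) * Ψ (m - (k + 1) + s) := by
  set f : ℕ → ℝ := fun s => Ψ (m - (k + 1) + s) with hf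
  have h0 : lfmoRate Ψ m (k + 1)
      = (∑ t ∈ range (k + 1), (k.choose t : ℝ) * (-1) ^ t * f (t + 1))
        - ∑ t ∈ range (k + 1), (k.choose t : ℝ) * (-1) ^ t * f t := by
    rw [lfmoRate, ← Finset.sum_sub_distrib]
    refine Finset.sum_congr rfl fun t _ => ?_
    simp [hf]; ring
  have h2 : ∑ t ∈ range (k + 1), (k.choose t : ℝ) * (-1) ^ t * f (t + 1)
      = ∑ s ∈ range (k + 2),
          (if s = 0 then 0 else (k.choose (s - 1) : ℝ) * (-1) ^ (s - 1)) * f s := by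
    rw [Finset.sum_range_succ' (fun s => (if s = 0 then 0 else (k.choose (s - 1) : ℝ) * (-1) ^ (s - 1)) * f s) (k+1)]
    simp
  have h3 : ∑ s ∈ range (k + 2), (k.choose s : ℝ) * (-1) ^ s * f s
      = ∑ t ∈ range (k + 1), (k.choose t : ℝ) * (-1) ^ t * f t := by
    rw [Finset.sum_range_succ]
    simp [Nat.choose_eq_zero_of_lt (Nat.lt_succ_self k)]
  rw [h0, h2, ← h3, ← Finset.sum_sub_distrib]
  refine Finset.sum_congr rfl fun s _ => ?_
  rcases s with _ | t
  · simp [hf]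
  · simp only [Nat.succ_ne_zero, if_false, Nat.succ_sub_one]
    have : ((k + 1).choose (t + 1) : ℝ) = k.choose t + k.choose (t + 1) := by
      rw [Nat.choose_succ_succ]; push_cast; ring
    rw [this]; ring

/-- The transition rate of the continuous-time Markov chain of the number of failed
components, from `i` failed to `j` failed components, equals the stated alternating
sum of values of `Ψ`. -/
theorem stmt4 (Ψ : ℕ → ℝ) (n i j : ℕ) (hij : i < j) (hjn : j ≤ n) :
    ((n - i).choose (j - i) : ℝ) * lfmoRate Ψ (n - i) (j - i) =
      ∑ k ∈ Finset.Icc i j,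
        (-1 : ℝ) ^ (j - k + 1) *
          ((n.choose j : ℝ) * (j.choose k : ℝ) * (k.choose i : ℝ) / (n.choose i : ℝ)) *
          Ψ (n - k) := by
  have hin : i ≤ n := le_of_lt (lt_of_lt_of_le hij hjn)
  have hk1 : j - i = (j - i - 1) + 1 := by omega
  have hmk : (n - i) - (j - i) = n - j := by omega
  have hr2 : j - i - 1 + 2 = j - i + 1 := by omega
  rw [hk1, lfmo_aux, ← hk1, hmk, hr2, Finset.mul_sum]
  rw [← Finset.Ico_add_one_right_eq_Icc, Finset.sum_Ico_eq_sum_range]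
  have hrange : j + 1 - i = j - i + 1 := by omega
  rw [hrange]
  rw [← Finset.sum_range_reflect]
  refine Finset.sum_congr rfl fun t ht => ?_
  have ht' : t ≤ j - i := by
    simp only [Finset.mem_range] at ht; omega
  have h1 : j - i + 1 - 1 - t = j - i - t := by omega
  have h2 : j - (i + t) = j - i - t := by omega
  have h3 : n - j + (j - i - t) = n - (i + t) := by omega
  rw [h1, h2, h3]
  have hkey : (n.choose j : ℝ) * ((i + t).choose i : ℝ) * (j.choose (i + t) : ℝ)
      = (n.choose i : ℝ) * (((n - i).choose (j - i)) : ℝ) * ((j - i).choose t : ℝ) := by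
    have hnat : n.choose j * j.choose (i + t) * ((i + t).choose i)
        = n.choose i * ((n - i).choose (j - i) * (j - i).choose t) := by
      have e1 : n.choose j * j.choose (i + t) = n.choose (i + t) * (n - (i + t)).choose (j - (i + t)) :=
        Nat.choose_mul (by omega)
      have e2 : n.choose (i + t) * (i + t).choose i = n.choose i * (n - i).choose (i + t - i) :=
        Nat.choose_mul (by omega)
      have e3 : (n - i).choose (j - i) * (j - i).choose t
          = (n - i).choose t * ((n - i) - t).choose (j - i - t) :=
        Nat.choose_mul (by omega)
      have e4 : i + t - i = t := by omega
      have e5 : (n - i) - t = n - (i + t) := by omega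
      calc n.choose j * j.choose (i + t) * ((i + t).choose i)
          = n.choose (i + t) * (i + t).choose i * (n - (i + t)).choose (j - (i + t)) := by
            rw [e1]; ring
        _ = n.choose i * (n - i).choose t * (n - (i + t)).choose (j - (i + t)) := by
            rw [e2, e4]
        _ = n.choose i * ((n - i).choose (j - i) * (j - i).choose t) := by
            rw [e3, e5, h2]; ring
    have := congrArg (fun x : ℕ => (x : ℝ)) hnat
    push_cast at this
    linarith [this]
  have hsym : (j - i).choose (j - i - t) = (j - i).choose t := Nat.choose_symm ht'
  rw [hsym]
  have hci : (n.choose i : ℝ) ≠ 0 := Nat.cast_ne_zero.mpr (Nat.choose_pos hin).ne'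
  field_simp
  linear_combination (-Ψ (n - (i + t))) * hkey
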